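/- Let G be a connected and co-connected graph with n vertices. Then every connecting hypergraph H of G satisfies cost(H) ≥ 2(n − 1)/3. -/

import Mathlib

variable {V : Type*}

/-- The transition consisting of the edges `ab` and `bc`, written `abc`. -/
def transitionOf (a b c : V) : Sym2 (Sym2 V) := s(s(a, b), s(b, c))

/-- `t` is a transition of `G`: an unordered pair of two distinct adjacent edges. -/
def SimpleGraph.IsTransition (G : SimpleGraph V) (t : Sym2 (Sym2 V)) : Prop :=
  ∃ a b c, G.Adj a b ∧ G.Adj b c ∧ a ≠ c ∧ t = transitionOf a b c

/-- A list of vertices (the support of a walk) is `T`-compatible: every pair of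
consecutive edges is either a transition of `T` or a backtrack. -/
def TCompatible (T : Set (Sym2 (Sym2 V))) (l : List V) : Prop :=
  ∀ (i : ℕ) (h : i + 2 < l.length),
    l[i]'(by omega) = l[i + 2]'h ∨
    transitionOf (l[i]'(by omega)) (l[i + 1]'(by omega)) (l[i + 2]'h) ∈ T

/-- `G` is `T`-connected: every two vertices are joined by a `T`-compatible walk. -/
def SimpleGraph.TConnected (G : SimpleGraph V) (T : Set (Sym2 (Sym2 V))) : Prop :=
  ∀ u v : V, ∃ p : G.Walk u v, TCompatible T p.support

/-- `T` is a connecting transition set of `G`. -/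
def SimpleGraph.ConnectingTransitionSet (G : SimpleGraph V)
    (T : Finset (Sym2 (Sym2 V))) : Prop :=
  (∀ t ∈ T, G.IsTransition t) ∧ G.TConnected ↑T

/-- `H` is a connecting hypergraph of `G`: every hyperedge has at least two vertices and
induces a connected subgraph, and every pair of distinct non-adjacent vertices is
contained in a common hyperedge. -/
def SimpleGraph.ConnectingHypergraph (G : SimpleGraph V) (H : Finset (Finset V)) : Prop :=
  (∀ E ∈ H, 2 ≤ E.card ∧ (G.induce (E : Set V)).Connected) ∧
  ∀ u v : V, u ≠ v → ¬G.Adj u v → ∃ E ∈ H, u ∈ E ∧ v ∈ E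

/-- The cost of a hypergraph: the sum over hyperedges of (size − 2). -/
def hcost (H : Finset (Finset V)) : ℕ := ∑ E ∈ H, (E.card - 2)

/-- The quantity τ(G): the sum over co-connected components `C` of `G` with `|C| ≥ 2`
of `|C| − 2` if `G[C]` is connected and `|C| − 1` otherwise. -/
noncomputable def tau {V : Type*} [Fintype V] (G : SimpleGraph V) : ℕ := by
  classical
  haveI : Fintype Gᶜ.ConnectedComponent := Fintype.ofFinite _
  exact ∑ C : Gᶜ.ConnectedComponent,
    if 2 ≤ C.supp.ncard then
      (if (G.induce C.supp).Connected then C.supp.ncard - 2 else C.supp.ncard - 1)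
    else 0

section Aux

open Finset

variable {V : Type*}

private lemma countAux {α β : Type*} [Fintype α] [Fintype β] [DecidableEq α] (f : α → β)
    (S : Finset α) (h : ∀ a1 a2, f a1 = f a2 → a1 ≠ a2 → a1 ∈ S ∧ a2 ∈ S) :
    Fintype.card α ≤ Fintype.card β + (S.card - 1) := by
  by_cases hS : S.Nonempty
  · obtain ⟨s0, hs0⟩ := hS
    set T : Finset α := Sᶜ ∪ {s0} with hT
    have hinj : Set.InjOn f T := by
      intro a ha b hb heq
      by_contra hne
      obtain ⟨haS, hbS⟩ := h a b heq hne
      have ha' : a = s0 := by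
        rcases Finset.mem_union.mp ha with h' | h'
        · exact absurd haS (Finset.mem_compl.mp h')
        · exact Finset.mem_singleton.mp h'
      have hb' : b = s0 := by
        rcases Finset.mem_union.mp hb with h' | h'
        · exact absurd hbS (Finset.mem_compl.mp h')
        · exact Finset.mem_singleton.mp h'
      exact hne (ha'.trans hb'.symm)
    have hcard : T.card ≤ Fintype.card β := by
      have := Finset.card_le_card_of_injOn f
        (fun a _ => Finset.mem_univ (f a)) hinj
      simpa using this
    have hTcard : T.card = (Fintype.card α - S.card) + 1 := by
      rw [hT, Finset.card_union_of_disjoint, Finset.card_compl, Finset.card_singleton]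
      simp [Finset.disjoint_singleton_right, hs0]
    have hle : S.card ≤ Fintype.card α := S.card_le_univ
    have h1 : 1 ≤ S.card := Finset.card_pos.mpr ⟨s0, hs0⟩
    omega
  · have hinj : Function.Injective f := by
      intro a b heq
      by_contra hne
      exact hS ⟨a, (h a b heq hne).1⟩
    exact le_trans (Fintype.card_le_of_injective f hinj) (Nat.le_add_right _ _)

private lemma reach_meets {K K' : SimpleGraph V} (D : Finset V)
    (hD : ∀ u v, K'.Adj u v → ¬K.Adj u v → u ∈ D)
    {x y : V} (p : K'.Walk x y) : ¬K.Reachable x y → ∃ z ∈ D, K.Reachable x z := by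
  induction p with
  | nil => exact fun hxy => absurd (SimpleGraph.Reachable.refl _) hxy
  | @cons u v w h p ih =>
    intro hxy
    by_cases hK : K.Adj u v
    · by_cases hr : K.Reachable v w
      · exact absurd (hK.reachable.trans hr) hxy
      · obtain ⟨z, hz, hrz⟩ := ih hr
        exact ⟨z, hz, hK.reachable.trans hrz⟩
    · exact ⟨u, hD u v h hK, SimpleGraph.Reachable.refl u⟩

private lemma compLe [Fintype V] {K K' : SimpleGraph V} (hle : K ≤ K') (D : Finset V)
    (hD : ∀ u v, K'.Adj u v → ¬K.Adj u v → u ∈ D) :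
    Nat.card K.ConnectedComponent ≤ Nat.card K'.ConnectedComponent + (D.card - 1) := by
  classical
  haveI : Finite K.ConnectedComponent := Quot.finite _
  haveI : Finite K'.ConnectedComponent := Quot.finite _
  haveI := Fintype.ofFinite K.ConnectedComponent
  haveI := Fintype.ofFinite K'.ConnectedComponent
  rw [Nat.card_eq_fintype_card, Nat.card_eq_fintype_card]
  set f : K.ConnectedComponent → K'.ConnectedComponent :=
    SimpleGraph.ConnectedComponent.map (SimpleGraph.Hom.ofLE hle) with hf
  set S : Finset K.ConnectedComponent :=
    Finset.univ.filter (fun c => ∃ v ∈ D, K.connectedComponentMk v = c) with hSdef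
  have hScard : S.card ≤ D.card := by
    apply Finset.card_le_card_of_surjOn K.connectedComponentMk
    intro c hc
    obtain ⟨v, hv, hvc⟩ := (Finset.mem_filter.mp hc).2
    exact ⟨v, hv, hvc⟩
  have key : ∀ c1 c2, f c1 = f c2 → c1 ≠ c2 → c1 ∈ S ∧ c2 ∈ S := by
    refine SimpleGraph.ConnectedComponent.ind₂ ?_
    intro x y hfe hne
    have hfx : f (K.connectedComponentMk x) = K'.connectedComponentMk x := rfl
    have hfy : f (K.connectedComponentMk y) = K'.connectedComponentMk y := rfl
    have hreach' : K'.Reachable x y := by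
      apply SimpleGraph.ConnectedComponent.exact
      rw [← hfx, ← hfy]; exact hfe
    have hnr : ¬K.Reachable x y := fun h => hne (SimpleGraph.ConnectedComponent.sound h)
    obtain ⟨z, hz, hrz⟩ := reach_meets D hD hreach'.some hnr
    obtain ⟨z', hz', hrz'⟩ := reach_meets D hD hreach'.symm.some (fun h => hnr h.symm)
    constructor
    · exact Finset.mem_filter.mpr ⟨Finset.mem_univ _, z, hz,
        (SimpleGraph.ConnectedComponent.sound hrz).symm⟩
    · exact Finset.mem_filter.mpr ⟨Finset.mem_univ _, z', hz',
        (SimpleGraph.ConnectedComponent.sound hrz').symm⟩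
  have := countAux f S key
  omega

private lemma exists_adj_of_reachable {K : SimpleGraph V} {x y : V}
    (h : K.Reachable x y) (hne : x ≠ y) : ∃ z, K.Adj x z := by
  obtain ⟨p⟩ := h
  cases p with
  | nil => exact absurd rfl hne
  | cons h _ => exact ⟨_, h⟩

private lemma exists_nbr {G : SimpleGraph V} {E : Finset V}
    (hconn : (G.induce (E : Set V)).Connected) (h2 : 2 ≤ E.card) {v : V} (hv : v ∈ E) :
    ∃ w ∈ E, G.Adj v w := by
  obtain ⟨u, hu, hne⟩ := E.exists_mem_ne (by omega) v
  have hreach := hconn.preconnected ⟨v, hv⟩ ⟨u, hu⟩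
  obtain ⟨z, hz⟩ := exists_adj_of_reachable hreach
    (fun hh => hne (congrArg Subtype.val hh).symm)
  exact ⟨z.1, z.2, hz⟩

private lemma step_bound [DecidableEq V] (G : SimpleGraph V) {E : Finset V}
    (h2 : 2 ≤ E.card) (hconn : (G.induce (E : Set V)).Connected) :
    ∃ D : Finset V, (∀ u v, u ∈ E → v ∈ E → u ≠ v → ¬G.Adj u v → u ∈ D) ∧
      2 * (D.card - 1) ≤ 3 * (E.card - 2) := by
  classical
  by_cases h4 : 4 ≤ E.card
  · exact ⟨E, fun u v hu _ _ _ => hu, by omega⟩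
  refine ⟨E.filter (fun v => ∃ w ∈ E, w ≠ v ∧ ¬G.Adj v w), ?_, ?_⟩
  · intro u v hu hv hne hnadj
    exact Finset.mem_filter.mpr ⟨hu, v, hv, hne.symm, hnadj⟩
  have hno : ∀ v ∈ E, ∃ w ∈ E, G.Adj v w := fun v hv => exists_nbr hconn h2 hv
  rcases (by omega : E.card = 2 ∨ E.card = 3) with hEc | hEc
  · -- card = 2
    obtain ⟨a, b, hab, hE⟩ := Finset.card_eq_two.mp hEc
    have : E.filter (fun v => ∃ w ∈ E, w ≠ v ∧ ¬G.Adj v w) = ∅ := by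
      rw [Finset.filter_eq_empty_iff]
      rintro v hv ⟨w, hw, hwv, hnadj⟩
      rw [hE] at hv hw
      simp only [Finset.mem_insert, Finset.mem_singleton] at hv hw
      have hab' : G.Adj a b := by
        obtain ⟨w', hw', hadj⟩ := hno a (by rw [hE]; simp)
        rw [hE] at hw'
        simp only [Finset.mem_insert, Finset.mem_singleton] at hw'
        rcases hw' with rfl | rfl
        · exact absurd rfl hadj.ne
        · exact hadj
      rcases hv with rfl | rfl <;> rcases hw with rfl | rfl
      · exact hwv rfl
      · exact hnadj hab'
      · exact hnadj hab'.symm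
      · exact hwv rfl
    rw [this]
    simp
  · -- card = 3
    have hle2 : (E.filter (fun v => ∃ w ∈ E, w ≠ v ∧ ¬G.Adj v w)).card ≤ 2 := by
      by_contra h3
      push_neg at h3
      have hfe : E.filter (fun v => ∃ w ∈ E, w ≠ v ∧ ¬G.Adj v w) = E :=
        Finset.eq_of_subset_of_card_le (Finset.filter_subset _ _) (by omega)
      have hp : ∀ v ∈ E, ∃ w ∈ E, w ≠ v ∧ ¬G.Adj v w := by
        intro v hv
        have hv' : v ∈ E.filter (fun v => ∃ w ∈ E, w ≠ v ∧ ¬G.Adj v w) := by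
          rw [hfe]; exact hv
        exact (Finset.mem_filter.mp hv').2
      obtain ⟨a, b, c, hab, hac, hbc, hE⟩ := Finset.card_eq_three.mp hEc
      have hmem : ∀ x, x ∈ E ↔ x = a ∨ x = b ∨ x = c := by
        intro x; rw [hE]; simp
      have pa : ¬G.Adj a b ∨ ¬G.Adj a c := by
        obtain ⟨w, hw, hwa, hn⟩ := hp a ((hmem a).mpr (Or.inl rfl))
        rcases (hmem w).mp hw with rfl | rfl | rfl
        · exact absurd rfl hwa
        · exact Or.inl hn
        · exact Or.inr hn
      have pb : ¬G.Adj a b ∨ ¬G.Adj b c := by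
        obtain ⟨w, hw, hwb, hn⟩ := hp b ((hmem b).mpr (Or.inr (Or.inl rfl)))
        rcases (hmem w).mp hw with rfl | rfl | rfl
        · exact Or.inl (fun hh => hn hh.symm)
        · exact absurd rfl hwb
        · exact Or.inr hn
      have pc : ¬G.Adj a c ∨ ¬G.Adj b c := by
        obtain ⟨w, hw, hwc, hn⟩ := hp c ((hmem c).mpr (Or.inr (Or.inr rfl)))
        rcases (hmem w).mp hw with rfl | rfl | rfl
        · exact Or.inl (fun hh => hn hh.symm)
        · exact Or.inr (fun hh => hn hh.symm)
        · exact absurd rfl hwc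
      have na : G.Adj a b ∨ G.Adj a c := by
        obtain ⟨w, hw, hadj⟩ := hno a ((hmem a).mpr (Or.inl rfl))
        rcases (hmem w).mp hw with rfl | rfl | rfl
        · exact absurd rfl hadj.ne
        · exact Or.inl hadj
        · exact Or.inr hadj
      have nb : G.Adj a b ∨ G.Adj b c := by
        obtain ⟨w, hw, hadj⟩ := hno b ((hmem b).mpr (Or.inr (Or.inl rfl)))
        rcases (hmem w).mp hw with rfl | rfl | rfl
        · exact Or.inl hadj.symm
        · exact absurd rfl hadj.ne
        · exact Or.inr hadj
      have nc : G.Adj a c ∨ G.Adj b c := by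
        obtain ⟨w, hw, hadj⟩ := hno c ((hmem c).mpr (Or.inr (Or.inr rfl)))
        rcases (hmem w).mp hw with rfl | rfl | rfl
        · exact Or.inl hadj.symm
        · exact Or.inr hadj.symm
        · exact absurd rfl hadj.ne
      tauto
    omega

/-- The auxiliary graph whose edges are the non-edges of `G` covered by a member of `S`. -/
private def KG (G : SimpleGraph V) (S : Finset (Finset V)) : SimpleGraph V where
  Adj u v := u ≠ v ∧ ¬G.Adj u v ∧ ∃ E ∈ S, u ∈ E ∧ v ∈ E
  symm := ⟨by
    rintro u v ⟨h1, h2, E, hE, hu, hv⟩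
    exact ⟨h1.symm, fun h => h2 h.symm, E, hE, hv, hu⟩⟩
  loopless := ⟨fun v h => h.1 rfl⟩

end Aux

/-- Every connecting hypergraph of a connected and co-connected graph on `n` vertices
has cost at least `2(n − 1)/3`. -/
theorem stmt12 {V : Type*} [Fintype V] [DecidableEq V] (G : SimpleGraph V)
    (hc : G.Connected) (hcc : Gᶜ.Connected)
    (H : Finset (Finset V)) (hH : G.ConnectingHypergraph H) :
    2 * (Fintype.card V - 1) ≤ 3 * hcost H := by
  classical
  have main : ∀ S : Finset (Finset V), S ⊆ H →
      2 * Fintype.card V ≤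
        2 * Nat.card (KG G S).ConnectedComponent + 3 * ∑ E ∈ S, (E.card - 2) := by
    intro S
    induction S using Finset.induction_on with
    | empty =>
      intro _
      have hbot : KG G ∅ = ⊥ := by
        ext u v
        simp [KG]
      have hbij : Function.Bijective ((KG G ∅).connectedComponentMk) := by
        constructor
        · intro u v h
          have hr := SimpleGraph.ConnectedComponent.exact h
          rw [hbot] at hr
          exact SimpleGraph.reachable_bot.mp hr
        · exact fun c => Quot.exists_rep c
      have hcard : Nat.card (KG G ∅).ConnectedComponent = Fintype.card V := by
        have h := Nat.card_eq_of_bijective _ hbij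
        rw [Nat.card_eq_fintype_card] at h
        exact h.symm
      rw [hcard]
      simp
    | @insert E S hES ih =>
      intro hsub
      have hEH : E ∈ H := hsub (Finset.mem_insert_self E S)
      have hSH : S ⊆ H := fun x hx => hsub (Finset.mem_insert_of_mem hx)
      obtain ⟨h2E, hconnE⟩ := hH.1 E hEH
      obtain ⟨D, hDmem, hDcost⟩ := step_bound G h2E hconnE
      have hle : KG G S ≤ KG G (insert E S) := by
        rintro u v ⟨h1, h2, E', hE', hu, hv⟩
        exact ⟨h1, h2, E', Finset.mem_insert_of_mem hE', hu, hv⟩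
      have hD : ∀ u v, (KG G (insert E S)).Adj u v → ¬(KG G S).Adj u v → u ∈ D := by
        rintro u v ⟨h1, h2, E', hE', hu, hv⟩ hnadj
        rcases Finset.mem_insert.mp hE' with rfl | hE'S
        · exact hDmem u v hu hv h1 h2
        · exact absurd ⟨h1, h2, E', hE'S, hu, hv⟩ hnadj
      have hcomp := compLe hle D hD
      have hsum : ∑ E' ∈ insert E S, (E'.card - 2) =
          (E.card - 2) + ∑ E' ∈ S, (E'.card - 2) := Finset.sum_insert hES
      have hih := ih hSH
      rw [hsum]
      omega
  have h1 := main H (subset_refl H)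
  have hconnKG : (KG G H).Connected := by
    haveI : Nonempty V := hcc.nonempty
    apply SimpleGraph.Connected.mk
    intro u v
    refine SimpleGraph.Reachable.mono ?_ (hcc.preconnected u v)
    intro a b hab
    rw [SimpleGraph.compl_adj] at hab
    obtain ⟨hne, hnadj⟩ := hab
    obtain ⟨E, hE, ha, hb⟩ := hH.2 a b hne hnadj
    exact ⟨hne, hnadj, E, hE, ha, hb⟩
  have hcard1 : Nat.card (KG G H).ConnectedComponent = 1 := by
    rw [Nat.card_eq_one_iff_unique]
    exact ⟨hconnKG.preconnected.subsingleton_connectedComponent,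
      ⟨(KG G H).connectedComponentMk hconnKG.nonempty.some⟩⟩
  rw [hcard1] at h1
  have hcosteq : hcost H = ∑ E ∈ H, (E.card - 2) := rfl
  rw [hcosteq]
  omega
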